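/- Let a₁,…,a_n and b₁,…,b_n be orthonormal sets in ℂ^r, and for each i let U_i be a unitary acting as the identity on the orthogonal complement of span{a_i, a_i⊥} (where a_i⊥ is the component of b_i orthogonal to a_i, normalized), with U_i·a_i = b_i, and suppose a_i = U_{i−1}···U₁·e_i. Then for all i and j ≥ 1: U_{i+j}···U_{i+1}U_i·a_i = b_i. -/

import Mathlib

/-- The composition `U (k-1) ∘ ⋯ ∘ U 1 ∘ U 0` of the first `k` unitaries. -/
noncomputable def prodUpTo {E : Type*} [NormedAddCommGroup E] [InnerProductSpace ℂ E]
    (U : ℕ → (E ≃ₗᵢ[ℂ] E)) : ℕ → (E ≃ₗᵢ[ℂ] E)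
  | 0 => LinearIsometryEquiv.refl ℂ E
  | (k + 1) => (prodUpTo U k).trans (U k)

theorem stmt10 {E : Type*} [NormedAddCommGroup E] [InnerProductSpace ℂ E]
    (n : ℕ) (e b : ℕ → E) (U : ℕ → (E ≃ₗᵢ[ℂ] E))
    (he : ∀ i k, i < n → k < n → (inner ℂ (e i) (e k) : ℂ) = if i = k then 1 else 0)
    (hbo : ∀ i k, i < n → k < n → (inner ℂ (b i) (b k) : ℂ) = if i = k then 1 else 0)
    (hmap : ∀ i, i < n → U i (prodUpTo U i (e i)) = b i)
    (hid : ∀ i, i < n → ∀ x : E,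
      (inner ℂ (prodUpTo U i (e i)) x : ℂ) = 0 → (inner ℂ (b i) x : ℂ) = 0 → U i x = x) :
    ∀ i j, 1 ≤ j → i + j < n → prodUpTo U (i + j + 1) (e i) = b i := by
  have key : ∀ m i, i < m → m ≤ n → prodUpTo U m (e i) = b i := by
    intro m
    induction m with
    | zero => intro i h; omega
    | succ m ih =>
      intro i him hmn
      have hmn' : m < n := hmn
      show (U m) (prodUpTo U m (e i)) = b i
      rcases Nat.lt_or_ge i m with hlt | hge
      · have hb : prodUpTo U m (e i) = b i := ih i hlt (le_of_lt hmn)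
        rw [hb]
        have hin : i < n := lt_of_lt_of_le him hmn
        have hmi : m ≠ i := Nat.ne_of_gt hlt
        apply hid m hmn'
        · have : (inner ℂ (prodUpTo U m (e m)) (prodUpTo U m (e i)) : ℂ)
              = inner ℂ (e m) (e i) := (prodUpTo U m).inner_map_map _ _
          rw [hb] at this
          rw [this, he m i hmn' hin, if_neg hmi]
        · rw [hbo m i hmn' hin, if_neg hmi]
      · have : i = m := le_antisymm (Nat.lt_succ_iff.mp him) hge
        subst this
        exact hmap i hmn'
  intro i j _ hij
  exact key (i + j + 1) i (by omega) (by omega)
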